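/- arXiv:1301.1097 — 4 statements merged into one kernel-verified Lean document; each statement's English description precedes it below -/
import Mathlib

section
/- If (log n + ω(1))/n ≤ p ≤ (1.1 log n)/n, then asymptotically almost surely in G ~ G(n,p): for every vertex set S with n/(log n)³ ≤ |S| ≤ n/2, the number of edges between S and its complement is at least (log n/10)·|S|. -/
open scoped Classical
open Filter

/-- Number of edges of a finite simple graph. -/
noncomputable def edgeCount {V : Type*} [Fintype V] (G : SimpleGraph V) : ℕ :=
  G.edgeFinset.card

/-- `G` contains `k` pairwise edge-disjoint spanning trees. -/
def HasDisjSpanningTrees {V : Type*} (G : SimpleGraph V) (k : ℕ) : Prop :=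
  ∃ f : Fin k → SimpleGraph V, (∀ i, f i ≤ G) ∧ (∀ i, (f i).IsTree) ∧
    ∀ i j, i ≠ j → Disjoint (f i).edgeSet (f j).edgeSet

/-- Spanning tree packing number: the maximum number of pairwise
edge-disjoint spanning trees of `G`. -/
noncomputable def stp {V : Type*} (G : SimpleGraph V) : ℕ :=
  sSup {k | HasDisjSpanningTrees G k}

/-- Number of edges of `G` between `S` and its complement. -/
noncomputable def crossCount {V : Type*} [Fintype V] (G : SimpleGraph V) (S : Finset V) : ℕ :=
  ((S ×ˢ Sᶜ).filter fun e => G.Adj e.1 e.2).card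

/-- Number of crossing edges of a partition `P` of the vertex set:
edges whose two endpoints lie in different parts of `P`. -/
noncomputable def partCross {V : Type*} [Fintype V] (G : SimpleGraph V)
    (P : Finpartition (Finset.univ : Finset V)) : ℕ :=
  (G.edgeFinset.filter fun e => ∀ t ∈ P.parts, ¬ ∀ v ∈ e, v ∈ t).card

/-- Probability that the Erdős–Rényi random graph `G(n,p)` satisfies `Q`. -/
noncomputable def grProb (n : ℕ) (p : ℝ) (Q : SimpleGraph (Fin n) → Prop) : ℝ :=
  ∑ G : SimpleGraph (Fin n),
    if Q G then p ^ edgeCount G * (1 - p) ^ (n.choose 2 - edgeCount G) else 0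

namespace AAS
open Finset

noncomputable def slots (n : ℕ) : Finset (Sym2 (Fin n)) :=
  Finset.univ.filter (fun e => ¬ e.IsDiag)

lemma card_slots (n : ℕ) : (slots n).card = n.choose 2 := by
  rw [slots, ← Fintype.card_subtype]
  rw [Sym2.card_subtype_not_diag, Fintype.card_fin]

lemma edgeFinset_fromEdgeSet {n : ℕ} (A : Finset (Sym2 (Fin n))) (hA : A ∈ (slots n).powerset)
    {inst : Fintype (SimpleGraph.fromEdgeSet (A : Set (Sym2 (Fin n)))).edgeSet} :
    @SimpleGraph.edgeFinset _ (SimpleGraph.fromEdgeSet (A : Set (Sym2 (Fin n)))) inst = A := by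
  ext e
  simp only [SimpleGraph.mem_edgeFinset, SimpleGraph.edgeSet_fromEdgeSet, Set.mem_diff,
    Finset.mem_coe, Set.mem_setOf_eq]
  constructor
  · rintro ⟨he, -⟩; exact he
  · intro he
    refine ⟨he, ?_⟩
    have := Finset.mem_powerset.1 hA he
    simp only [slots, Finset.mem_filter] at this
    exact this.2

lemma grProb_eq {n : ℕ} {p : ℝ} (Q : SimpleGraph (Fin n) → Prop) :
    grProb n p Q = ∑ A ∈ (slots n).powerset,
      if Q (SimpleGraph.fromEdgeSet (A : Set (Sym2 (Fin n)))) then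
        p ^ A.card * (1 - p) ^ (n.choose 2 - A.card) else 0 := by
  rw [grProb]
  refine Finset.sum_nbij' (i := fun G => G.edgeFinset)
    (j := fun A => SimpleGraph.fromEdgeSet (A : Set (Sym2 (Fin n)))) ?_ ?_ ?_ ?_ ?_
  · intro G _
    rw [Finset.mem_powerset]
    intro e he
    rw [SimpleGraph.mem_edgeFinset] at he
    simp only [slots, Finset.mem_filter, Finset.mem_univ, true_and]
    exact G.not_isDiag_of_mem_edgeSet he
  · intro A _; exact Finset.mem_univ _
  · intro G _
    simp only [SimpleGraph.coe_edgeFinset, SimpleGraph.fromEdgeSet_edgeSet]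
  · intro A hA; simpa using edgeFinset_fromEdgeSet A hA
  · intro G _
    simp only [SimpleGraph.coe_edgeFinset, SimpleGraph.fromEdgeSet_edgeSet, edgeCount]

lemma sum_weight {α : Type*} [DecidableEq α] (p : ℝ) (s : Finset α) :
    ∑ A ∈ s.powerset, p ^ A.card * (1 - p) ^ (s.card - A.card) = 1 := by
  have h := Finset.prod_add (fun _ : α => p) (fun _ => 1 - p) s
  simp only [Finset.prod_const] at h
  have h2 : (p + (1 - p)) ^ s.card = 1 := by norm_num
  rw [h2] at h
  calc ∑ A ∈ s.powerset, p ^ A.card * (1 - p) ^ (s.card - A.card)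
      = ∑ A ∈ s.powerset, p ^ A.card * (1 - p) ^ ((s \ A).card) := by
        refine Finset.sum_congr rfl fun A hA => ?_
        rw [Finset.card_sdiff_of_subset (Finset.mem_powerset.1 hA)]
    _ = 1 := h.symm

lemma sum_restrict {α : Type*} [DecidableEq α] (p : ℝ) (U E : Finset α) (hE : E ⊆ U)
    (R : Finset α → Prop) :
    ∑ A ∈ U.powerset, (if R (A ∩ E) then p ^ A.card * (1 - p) ^ (U.card - A.card) else 0)
      = ∑ B ∈ E.powerset, (if R B then p ^ B.card * (1 - p) ^ (E.card - B.card) else 0) := by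
  have key : ∑ A ∈ U.powerset, (if R (A ∩ E) then p ^ A.card * (1 - p) ^ (U.card - A.card) else 0)
      = ∑ x ∈ E.powerset ×ˢ (U \ E).powerset,
          (if R x.1 then p ^ x.1.card * (1 - p) ^ (E.card - x.1.card) else 0)
          * (p ^ x.2.card * (1 - p) ^ ((U \ E).card - x.2.card)) := by
    refine Finset.sum_nbij' (i := fun A => (A ∩ E, A \ E)) (j := fun x => x.1 ∪ x.2)
      ?_ ?_ ?_ ?_ ?_
    · intro A hA
      rw [Finset.mem_powerset] at hA
      rw [Finset.mem_product]
      constructor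
      · rw [Finset.mem_powerset]; exact Finset.inter_subset_right
      · rw [Finset.mem_powerset]; exact Finset.sdiff_subset_sdiff hA le_rfl
    · intro x hx
      rw [Finset.mem_product] at hx
      rw [Finset.mem_powerset]
      refine Finset.union_subset ?_ ?_
      · exact (Finset.mem_powerset.1 hx.1).trans hE
      · exact (Finset.mem_powerset.1 hx.2).trans (Finset.sdiff_subset)
    · intro A _
      ext a
      simp only [Finset.mem_union, Finset.mem_inter, Finset.mem_sdiff]
      tauto
    · intro x hx
      rw [Finset.mem_product, Finset.mem_powerset, Finset.mem_powerset] at hx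
      obtain ⟨h1, h2⟩ := hx
      have h3 : ∀ a ∈ x.2, a ∉ E := fun a ha => (Finset.mem_sdiff.1 (h2 ha)).2
      have e1 : (x.1 ∪ x.2) ∩ E = x.1 := by
        ext a
        simp only [Finset.mem_inter, Finset.mem_union]
        constructor
        · rintro ⟨h | h, hE'⟩
          · exact h
          · exact absurd hE' (h3 a h)
        · intro h; exact ⟨Or.inl h, h1 h⟩
      have e2 : (x.1 ∪ x.2) \ E = x.2 := by
        ext a
        simp only [Finset.mem_sdiff, Finset.mem_union]
        constructor
        · rintro ⟨h | h, hE'⟩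
          · exact absurd (h1 h) hE'
          · exact h
        · intro h; exact ⟨Or.inr h, h3 a h⟩
      exact Prod.ext e1 e2
    · intro A hA
      have hAU := Finset.mem_powerset.1 hA
      have h1 : (A ∩ E).card + (A \ E).card = A.card := Finset.card_inter_add_card_sdiff A E
      have h2 : (A ∩ E).card ≤ E.card := Finset.card_le_card Finset.inter_subset_right
      have h3 : (A \ E).card ≤ (U \ E).card :=
        Finset.card_le_card (Finset.sdiff_subset_sdiff hAU le_rfl)
      have h4 : (U \ E).card = U.card - E.card := Finset.card_sdiff_of_subset hE
      have h5 : E.card ≤ U.card := Finset.card_le_card hE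
      have h6 : A.card ≤ U.card := Finset.card_le_card hAU
      simp only [ite_mul, zero_mul]
      split_ifs with h
      · have e2 : U.card - A.card
            = (E.card - (A ∩ E).card) + ((U \ E).card - (A \ E).card) := by omega
        have e1 : A.card = (A ∩ E).card + (A \ E).card := h1.symm
        rw [e2, e1, pow_add, pow_add]
        ring
      · rfl
  rw [key, Finset.sum_product]
  have : ∀ B ∈ E.powerset,
      (∑ C ∈ (U \ E).powerset,
        (if R B then p ^ B.card * (1 - p) ^ (E.card - B.card) else 0)
          * (p ^ C.card * (1 - p) ^ ((U \ E).card - C.card)))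
      = (if R B then p ^ B.card * (1 - p) ^ (E.card - B.card) else 0) := by
    intro B _
    rw [← Finset.mul_sum, sum_weight, mul_one]
  exact Finset.sum_congr rfl this

lemma grProb_nonneg {n : ℕ} {p : ℝ} (hp0 : 0 ≤ p) (hp1 : p ≤ 1)
    (Q : SimpleGraph (Fin n) → Prop) : 0 ≤ grProb n p Q := by
  refine Finset.sum_nonneg fun G _ => ?_
  split_ifs
  · exact mul_nonneg (pow_nonneg hp0 _) (pow_nonneg (by linarith) _)
  · exact le_refl 0

lemma grProb_mono {n : ℕ} {p : ℝ} (hp0 : 0 ≤ p) (hp1 : p ≤ 1)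
    {Q Q' : SimpleGraph (Fin n) → Prop} (h : ∀ G, Q G → Q' G) :
    grProb n p Q ≤ grProb n p Q' := by
  refine Finset.sum_le_sum fun G _ => ?_
  split_ifs with h1 h2
  · exact le_refl _
  · exact absurd (h G h1) h2
  · exact mul_nonneg (pow_nonneg hp0 _) (pow_nonneg (by linarith) _)
  · exact le_refl _

lemma grProb_congr {n : ℕ} {p : ℝ}
    {Q Q' : SimpleGraph (Fin n) → Prop} (h : ∀ G, Q G ↔ Q' G) :
    grProb n p Q = grProb n p Q' := by
  refine Finset.sum_congr rfl fun G _ => ?_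
  rw [if_congr (h G) rfl rfl]

lemma grProb_false {n : ℕ} {p : ℝ} : grProb n p (fun _ => False) = 0 := by
  rw [grProb]
  simp

lemma grProb_total {n : ℕ} {p : ℝ} : grProb n p (fun _ => True) = 1 := by
  rw [grProb_eq, ← card_slots n]
  simp only [if_true]
  exact sum_weight p (slots n)

lemma grProb_compl {n : ℕ} {p : ℝ} (Q : SimpleGraph (Fin n) → Prop) :
    grProb n p Q = 1 - grProb n p (fun G => ¬ Q G) := by
  have h : grProb n p Q + grProb n p (fun G => ¬ Q G) = 1 := by
    conv_rhs => rw [← grProb_total (n := n) (p := p)]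
    rw [grProb, grProb, grProb, ← Finset.sum_add_distrib]
    refine Finset.sum_congr rfl fun G _ => ?_
    by_cases hQ : Q G
    · rw [if_pos hQ, if_neg (not_not_intro hQ), if_pos trivial, add_zero]
    · rw [if_neg hQ, if_pos hQ, if_pos trivial, zero_add]
  linarith

lemma grProb_union_bound {n : ℕ} {p : ℝ} (hp0 : 0 ≤ p) (hp1 : p ≤ 1)
    {ι : Type*} (I : Finset ι) (Bad : ι → SimpleGraph (Fin n) → Prop) :
    grProb n p (fun G => ∃ i ∈ I, Bad i G) ≤ ∑ i ∈ I, grProb n p (Bad i) := by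
  have key : ∀ (G : SimpleGraph (Fin n)) (inst : Decidable (∃ i ∈ I, Bad i G)),
      (@ite ℝ (∃ i ∈ I, Bad i G) inst
        (p ^ edgeCount G * (1 - p) ^ (n.choose 2 - edgeCount G)) 0)
      ≤ ∑ i ∈ I, (if Bad i G then p ^ edgeCount G * (1 - p) ^ (n.choose 2 - edgeCount G) else 0) := by
    intro G inst
    have hw : (0:ℝ) ≤ p ^ edgeCount G * (1 - p) ^ (n.choose 2 - edgeCount G) :=
      mul_nonneg (pow_nonneg hp0 _) (pow_nonneg (by linarith) _)
    by_cases h : ∃ i ∈ I, Bad i G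
    · rw [if_pos h]
      obtain ⟨i0, hi0, hbad⟩ := h
      have h1 : p ^ edgeCount G * (1 - p) ^ (n.choose 2 - edgeCount G)
          = (if Bad i0 G then p ^ edgeCount G * (1 - p) ^ (n.choose 2 - edgeCount G) else 0) :=
        (if_pos hbad).symm
      refine h1.le.trans (Finset.single_le_sum
        (f := fun i => if Bad i G then
          p ^ edgeCount G * (1 - p) ^ (n.choose 2 - edgeCount G) else 0)
        (fun i _ => ?_) hi0)
      split_ifs
      · exact hw
      · exact le_refl 0
    · rw [if_neg h]
      exact Finset.sum_nonneg fun i _ => by split_ifs; exacts [hw, le_refl 0]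
  have swap : ∑ i ∈ I, grProb n p (Bad i)
      = ∑ G : SimpleGraph (Fin n), ∑ i ∈ I,
        (if Bad i G then p ^ edgeCount G * (1 - p) ^ (n.choose 2 - edgeCount G) else 0) := by
    calc ∑ i ∈ I, grProb n p (Bad i)
        = ∑ i ∈ I, ∑ G : SimpleGraph (Fin n),
            (if Bad i G then p ^ edgeCount G * (1 - p) ^ (n.choose 2 - edgeCount G) else 0) :=
          Finset.sum_congr rfl fun i _ => by simp only [grProb]
      _ = ∑ G : SimpleGraph (Fin n), ∑ i ∈ I,
            (if Bad i G then p ^ edgeCount G * (1 - p) ^ (n.choose 2 - edgeCount G) else 0) :=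
          Finset.sum_comm
  rw [swap, grProb]
  exact Finset.sum_le_sum fun G _ => key G _

noncomputable def crossSlots {n : ℕ} (S : Finset (Fin n)) : Finset (Sym2 (Fin n)) :=
  (S ×ˢ Sᶜ).image (fun q => s(q.1, q.2))

lemma crossSlots_subset {n : ℕ} (S : Finset (Fin n)) : crossSlots S ⊆ slots n := by
  intro e he
  rw [crossSlots, Finset.mem_image] at he
  obtain ⟨q, hq, rfl⟩ := he
  rw [Finset.mem_product, Finset.mem_compl] at hq
  simp only [slots, Finset.mem_filter, Finset.mem_univ, true_and]
  rw [Sym2.mk_isDiag_iff]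
  intro h
  exact hq.2 (h ▸ hq.1)

lemma cross_injOn {n : ℕ} (S : Finset (Fin n)) :
    Set.InjOn (fun q : Fin n × Fin n => s(q.1, q.2)) ↑(S ×ˢ Sᶜ) := by
  intro q hq q' hq' h
  simp only [Finset.coe_product, Set.mem_prod, Finset.mem_coe, Finset.mem_compl] at hq hq'
  simp only [Sym2.eq_iff] at h
  rcases h with ⟨h1, h2⟩ | ⟨h1, h2⟩
  · exact Prod.ext h1 h2
  · exact absurd (h1 ▸ hq.1) hq'.2

lemma card_crossSlots {n : ℕ} (S : Finset (Fin n)) :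
    (crossSlots S).card = S.card * Sᶜ.card := by
  rw [crossSlots, Finset.card_image_of_injOn (cross_injOn S), Finset.card_product]

lemma crossCount_eq {n : ℕ} (G : SimpleGraph (Fin n)) (S : Finset (Fin n))
    [inst : Fintype G.edgeSet] :
    crossCount G S = ((@SimpleGraph.edgeFinset _ G inst) ∩ crossSlots S).card := by
  have h0 : crossCount G S = ((S ×ˢ Sᶜ).filter fun q => G.Adj q.1 q.2).card := by
    rw [crossCount]
    congr 1
    ext q
    simp only [Finset.mem_filter, Finset.mem_product, Finset.mem_compl]
  rw [h0]
  refine Finset.card_bij (fun q _ => s(q.1, q.2)) ?_ ?_ ?_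
  · intro q hq
    rw [Finset.mem_filter] at hq
    rw [Finset.mem_inter, SimpleGraph.mem_edgeFinset, SimpleGraph.mem_edgeSet]
    exact ⟨hq.2, Finset.mem_image.2 ⟨q, hq.1, rfl⟩⟩
  · intro q hq q' hq' h
    rw [Finset.mem_filter] at hq hq'
    exact cross_injOn S (Finset.mem_coe.2 hq.1) (Finset.mem_coe.2 hq'.1) h
  · intro e he
    rw [Finset.mem_inter] at he
    obtain ⟨q, hq, rfl⟩ := Finset.mem_image.1 he.2
    have hadj : G.Adj q.1 q.2 := (SimpleGraph.mem_edgeSet G).1 (SimpleGraph.mem_edgeFinset.1 he.1)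
    exact ⟨q, Finset.mem_filter.2 ⟨hq, hadj⟩, rfl⟩

lemma tail_bound (p : ℝ) (hp0 : 0 ≤ p) (hp1 : p ≤ 1) (m : ℕ) (T : ℝ) (hT : 0 ≤ T) :
    ∑ k ∈ Finset.range (m + 1),
      (m.choose k : ℝ) * (if (k : ℝ) < T then p ^ k * (1 - p) ^ (m - k) else 0)
    ≤ Real.exp (2 * T - (1 - Real.exp (-2)) * (p * m)) := by
  have hq : (0:ℝ) ≤ 1 - p := by linarith
  have e2 : (0:ℝ) < Real.exp (-2) := Real.exp_pos _
  have step1 : ∀ k ∈ Finset.range (m + 1),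
      (m.choose k : ℝ) * (if (k : ℝ) < T then p ^ k * (1 - p) ^ (m - k) else 0)
      ≤ Real.exp (2 * T) * ((p * Real.exp (-2)) ^ k * (1 - p) ^ (m - k) * (m.choose k : ℝ)) := by
    intro k _
    have hnn : (0:ℝ) ≤ (p * Real.exp (-2)) ^ k * (1 - p) ^ (m - k) * (m.choose k : ℝ) :=
      mul_nonneg (mul_nonneg (pow_nonneg (mul_nonneg hp0 e2.le) _) (pow_nonneg hq _))
        (Nat.cast_nonneg _)
    split_ifs with h
    · have h1 : p ^ k ≤ Real.exp (2 * T) * (p * Real.exp (-2)) ^ k := by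
        rw [mul_pow, ← Real.exp_nat_mul]
        have h2 : (1:ℝ) ≤ Real.exp (2 * T) * Real.exp ((k:ℝ) * (-2)) := by
          rw [← Real.exp_add]
          have h3 : (0:ℝ) ≤ 2 * T + (k:ℝ) * (-2) := by nlinarith [h.le]
          calc (1:ℝ) = Real.exp 0 := Real.exp_zero.symm
            _ ≤ _ := Real.exp_le_exp.2 h3
        calc p ^ k = 1 * p ^ k := (one_mul _).symm
          _ ≤ (Real.exp (2 * T) * Real.exp ((k:ℝ) * (-2))) * p ^ k :=
              mul_le_mul_of_nonneg_right h2 (pow_nonneg hp0 _)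
          _ = Real.exp (2 * T) * (p ^ k * Real.exp ((k:ℝ) * (-2))) := by ring
      calc (m.choose k : ℝ) * (p ^ k * (1 - p) ^ (m - k))
          ≤ (m.choose k : ℝ) * ((Real.exp (2 * T) * (p * Real.exp (-2)) ^ k) * (1 - p) ^ (m - k)) := by
            refine mul_le_mul_of_nonneg_left ?_ (Nat.cast_nonneg _)
            exact mul_le_mul_of_nonneg_right h1 (pow_nonneg hq _)
        _ = Real.exp (2 * T) * ((p * Real.exp (-2)) ^ k * (1 - p) ^ (m - k) * (m.choose k : ℝ)) := by
            ring
    · rw [mul_zero]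
      exact mul_nonneg (Real.exp_pos (2 * T)).le hnn
  have step3 : (p * Real.exp (-2) + (1 - p)) ^ m
      ≤ Real.exp (-((1 - Real.exp (-2)) * (p * m))) := by
    have hb0 : (0:ℝ) ≤ p * Real.exp (-2) + (1 - p) := add_nonneg (mul_nonneg hp0 e2.le) hq
    have hb1 : p * Real.exp (-2) + (1 - p) ≤ Real.exp (-(p * (1 - Real.exp (-2)))) := by
      have h4 := Real.add_one_le_exp (-(p * (1 - Real.exp (-2))))
      nlinarith
    calc (p * Real.exp (-2) + (1 - p)) ^ m
        ≤ (Real.exp (-(p * (1 - Real.exp (-2))))) ^ m := pow_le_pow_left₀ hb0 hb1 m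
      _ = Real.exp ((m:ℝ) * (-(p * (1 - Real.exp (-2))))) := (Real.exp_nat_mul _ m).symm
      _ = Real.exp (-((1 - Real.exp (-2)) * (p * m))) := by congr 1; ring
  calc ∑ k ∈ Finset.range (m + 1),
        (m.choose k : ℝ) * (if (k : ℝ) < T then p ^ k * (1 - p) ^ (m - k) else 0)
      ≤ ∑ k ∈ Finset.range (m + 1),
        Real.exp (2 * T) * ((p * Real.exp (-2)) ^ k * (1 - p) ^ (m - k) * (m.choose k : ℝ)) :=
        Finset.sum_le_sum step1
    _ = Real.exp (2 * T) * ∑ k ∈ Finset.range (m + 1),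
        ((p * Real.exp (-2)) ^ k * (1 - p) ^ (m - k) * (m.choose k : ℝ)) :=
        (Finset.mul_sum _ _ _).symm
    _ = Real.exp (2 * T) * (p * Real.exp (-2) + (1 - p)) ^ m := by rw [← add_pow]
    _ ≤ Real.exp (2 * T) * Real.exp (-((1 - Real.exp (-2)) * (p * m))) :=
        mul_le_mul_of_nonneg_left step3 (Real.exp_pos _).le
    _ = Real.exp (2 * T - (1 - Real.exp (-2)) * (p * m)) := by
        rw [← Real.exp_add]
        ring_nf

lemma grProb_cross_lt {n : ℕ} {p : ℝ} (hp0 : 0 ≤ p) (hp1 : p ≤ 1)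
    (S : Finset (Fin n)) (T : ℝ) (hT : 0 ≤ T) :
    grProb n p (fun G => (crossCount G S : ℝ) < T)
      ≤ Real.exp (2 * T - (1 - Real.exp (-2)) * (p * (S.card * Sᶜ.card : ℕ))) := by
  set E := crossSlots S with hEdef
  have hE : E ⊆ slots n := crossSlots_subset S
  have key : grProb n p (fun G => (crossCount G S : ℝ) < T)
      = ∑ B ∈ E.powerset, (if ((B.card : ℕ) : ℝ) < T then
          p ^ B.card * (1 - p) ^ (E.card - B.card) else 0) := by
    rw [grProb_eq]
    refine Eq.trans (Finset.sum_congr rfl ?_)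
      (sum_restrict p (slots n) E hE (fun B => ((B.card : ℕ) : ℝ) < T))
    intro A hA
    refine if_congr ?_ (by rw [card_slots]) rfl
    rw [crossCount_eq _ S, edgeFinset_fromEdgeSet A hA]
  rw [key]
  have grp : ∑ B ∈ E.powerset, (if ((B.card : ℕ) : ℝ) < T then
          p ^ B.card * (1 - p) ^ (E.card - B.card) else 0)
      = ∑ k ∈ Finset.range (E.card + 1), (E.card.choose k : ℝ) *
          (if (k : ℝ) < T then p ^ k * (1 - p) ^ (E.card - k) else 0) := by
    have h := Finset.sum_powerset_apply_card
      (f := fun k => (if (k : ℝ) < T then p ^ k * (1 - p) ^ (E.card - k) else 0)) (x := E)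
    rw [h]
    refine Finset.sum_congr rfl fun k _ => ?_
    rw [nsmul_eq_mul]
  rw [grp]
  have := tail_bound p hp0 hp1 E.card T hT
  calc ∑ k ∈ Finset.range (E.card + 1), (E.card.choose k : ℝ) *
          (if (k : ℝ) < T then p ^ k * (1 - p) ^ (E.card - k) else 0)
      ≤ Real.exp (2 * T - (1 - Real.exp (-2)) * (p * E.card)) := this
    _ = Real.exp (2 * T - (1 - Real.exp (-2)) * (p * (S.card * Sᶜ.card : ℕ))) := by
        rw [card_crossSlots S]

lemma choose_le_exp (n k : ℕ) (hk : 1 ≤ k) (hkn : k ≤ n) :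
    (n.choose k : ℝ) ≤ Real.exp (k * (Real.log n + 1 - Real.log k)) := by
  have hk0 : (0:ℝ) < k := by exact_mod_cast hk
  have hn0 : (0:ℝ) < n := lt_of_lt_of_le hk0 (by exact_mod_cast hkn)
  have hfact : (0:ℝ) < (Nat.factorial k : ℝ) := by exact_mod_cast k.factorial_pos
  have h1 : (n.choose k : ℝ) ≤ (n:ℝ) ^ k / (Nat.factorial k : ℝ) := by
    rw [le_div_iff₀ hfact]
    have h := Nat.descFactorial_le_pow n k
    rw [Nat.descFactorial_eq_factorial_mul_choose] at h
    calc (n.choose k : ℝ) * (Nat.factorial k : ℝ)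
        = ((Nat.factorial k * n.choose k : ℕ) : ℝ) := by push_cast; ring
      _ ≤ ((n ^ k : ℕ) : ℝ) := by exact_mod_cast h
      _ = (n:ℝ) ^ k := by push_cast; ring
  have h2 : ((k:ℝ)) ^ k / (Nat.factorial k : ℝ) ≤ Real.exp k := by
    refine le_trans ?_ (Real.sum_le_exp_of_nonneg hk0.le (k + 1))
    exact Finset.single_le_sum (f := fun i => (k:ℝ) ^ i / (Nat.factorial i : ℝ))
      (fun i _ => div_nonneg (pow_nonneg hk0.le _) (by positivity))
      (Finset.self_mem_range_succ k)
  have h3 : (n:ℝ) ^ k / (Nat.factorial k : ℝ)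
      = ((n:ℝ) / k) ^ k * ((k:ℝ) ^ k / (Nat.factorial k : ℝ)) := by
    rw [div_pow]
    field_simp
  have h4 : (n.choose k : ℝ) ≤ ((n:ℝ) / k) ^ k * Real.exp k := by
    rw [h3] at h1
    exact h1.trans (mul_le_mul_of_nonneg_left h2 (by positivity))
  have h5 : ((n:ℝ) / k) ^ k = Real.exp ((k:ℝ) * Real.log ((n:ℝ) / k)) := by
    rw [Real.exp_nat_mul, Real.exp_log (div_pos hn0 hk0)]
  calc (n.choose k : ℝ) ≤ ((n:ℝ) / k) ^ k * Real.exp k := h4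
    _ = Real.exp ((k:ℝ) * Real.log ((n:ℝ) / k) + k) := by
        rw [h5, ← Real.exp_add]
    _ = Real.exp (k * (Real.log n + 1 - Real.log k)) := by
        congr 1
        rw [Real.log_div (ne_of_gt hn0) (ne_of_gt hk0)]
        ring

/-- The size condition for medium sets. -/
def condP (n k : ℕ) : Prop :=
  ((n:ℝ) / (Real.log n) ^ 3 ≤ (k:ℝ)) ∧ ((k:ℝ) ≤ (n:ℝ) / 2)

lemma exp_two_ge : (5:ℝ) ≤ Real.exp 2 := by
  have h := Real.exp_one_gt_d9
  have h2 : Real.exp 2 = Real.exp 1 * Real.exp 1 := by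
    rw [← Real.exp_add]; norm_num
  nlinarith

lemma exp_neg_two_le : Real.exp (-2) ≤ 1/5 := by
  rw [Real.exp_neg, inv_eq_one_div]
  have h0 : (0:ℝ) < 5 := by norm_num
  have := one_div_le_one_div_of_le h0 exp_two_ge
  linarith

lemma grProb_badS_le {n : ℕ} {p : ℝ} (hp0 : 0 ≤ p) (hp1 : p ≤ 1)
    (hL1 : 1 ≤ Real.log n) (hnp : Real.log n ≤ (n:ℝ) * p) (S : Finset (Fin n)) :
    grProb n p (fun G => condP n S.card ∧
        (crossCount G S : ℝ) < Real.log n / 10 * S.card)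
      ≤ (if condP n S.card then Real.exp (-((S.card : ℝ) * Real.log n / 5)) else 0) := by
  by_cases hc : condP n S.card
  · rw [if_pos hc]
    have hs0 : (0:ℝ) ≤ (S.card : ℝ) := Nat.cast_nonneg _
    have hT0 : (0:ℝ) ≤ Real.log n / 10 * S.card := by positivity
    have step1 : grProb n p (fun G => condP n S.card ∧
        (crossCount G S : ℝ) < Real.log n / 10 * S.card)
        ≤ grProb n p (fun G => (crossCount G S : ℝ) < Real.log n / 10 * S.card) :=
      grProb_mono hp0 hp1 (fun G h => h.2)
    have step2 := grProb_cross_lt hp0 hp1 S (Real.log n / 10 * S.card) hT0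
    refine (step1.trans step2).trans ?_
    rw [Real.exp_le_exp]
    set L := Real.log n with hLdef
    set s : ℝ := (S.card : ℝ) with hsdef
    have hcardle : S.card ≤ n := by
      have := Finset.card_le_univ S
      rwa [Fintype.card_fin] at this
    have hm : ((S.card * Sᶜ.card : ℕ) : ℝ) = s * ((n:ℝ) - s) := by
      rw [Nat.cast_mul, Finset.card_compl, Fintype.card_fin, Nat.cast_sub hcardle]
    rw [hm]
    have hs2 : s ≤ (n:ℝ) / 2 := hc.2
    have hns : (n:ℝ) / 2 ≤ (n:ℝ) - s := by linarith
    have t1 : s * ((n:ℝ) / 2) ≤ s * ((n:ℝ) - s) := mul_le_mul_of_nonneg_left hns hs0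
    have t2 : p * (s * ((n:ℝ) / 2)) ≤ p * (s * ((n:ℝ) - s)) :=
      mul_le_mul_of_nonneg_left t1 hp0
    have t3 : L * s / 2 ≤ p * (s * ((n:ℝ) / 2)) := by
      have h := mul_le_mul_of_nonneg_right hnp (show (0:ℝ) ≤ s / 2 by positivity)
      calc L * s / 2 = L * (s / 2) := by ring
        _ ≤ ((n:ℝ) * p) * (s / 2) := h
        _ = p * (s * ((n:ℝ) / 2)) := by ring
    have hpm : L * s / 2 ≤ p * (s * ((n:ℝ) - s)) := t3.trans t2
    have he : Real.exp (-2) ≤ 1/5 := exp_neg_two_le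
    have hLs0 : (0:ℝ) ≤ L * s := mul_nonneg (by linarith) hs0
    have hfrac : (4:ℝ)/5 ≤ 1 - Real.exp (-2) := by linarith
    have hmul : (4:ℝ)/5 * (L * s / 2) ≤ (1 - Real.exp (-2)) * (p * (s * ((n:ℝ) - s))) :=
      mul_le_mul hfrac hpm (by linarith) (by linarith)
    nlinarith [hmul]
  · rw [if_neg hc]
    have h1 : grProb n p (fun G => condP n S.card ∧
        (crossCount G S : ℝ) < Real.log n / 10 * S.card)
        ≤ grProb n p (fun _ => False) :=
      grProb_mono hp0 hp1 (fun G h => absurd h.1 hc)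
    rwa [grProb_false] at h1

lemma term_bound {n k : ℕ} (hL1 : 1 ≤ Real.log n)
    (h10 : 10 * (1 + 3 * Real.log (Real.log n)) ≤ Real.log n)
    (h20 : 20 * (Real.log n) ^ 3 ≤ (n:ℝ))
    (hc : condP n k) :
    (n.choose k : ℝ) * Real.exp (-((k : ℝ) * Real.log n / 5)) ≤ 1 / (n:ℝ) ^ 2 := by
  have hL0 : (0:ℝ) < Real.log n := by linarith
  have hL3 : (1:ℝ) ≤ (Real.log n) ^ 3 := one_le_pow₀ hL1
  have hn0 : (0:ℝ) < (n:ℝ) := by nlinarith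
  obtain ⟨hc1, hc2⟩ := hc
  have hnL3 : (0:ℝ) < (n:ℝ) / (Real.log n) ^ 3 := by positivity
  have hx0 : (0:ℝ) < (k:ℝ) := lt_of_lt_of_le hnL3 hc1
  have hk1 : 1 ≤ k := by
    have : 0 < k := by exact_mod_cast hx0
    omega
  have hkn : k ≤ n := by
    have hxn : (k:ℝ) ≤ (n:ℝ) := by linarith
    exact_mod_cast hxn
  have hlogk : Real.log n - 3 * Real.log (Real.log n) ≤ Real.log (k:ℝ) := by
    have h1 : Real.log ((n:ℝ) / (Real.log n) ^ 3) ≤ Real.log (k:ℝ) :=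
      Real.log_le_log hnL3 hc1
    rw [Real.log_div (ne_of_gt hn0) (by positivity), Real.log_pow] at h1
    calc Real.log n - 3 * Real.log (Real.log n)
        = Real.log n - (3:ℕ) * Real.log (Real.log n) := by push_cast; ring
      _ ≤ Real.log (k:ℝ) := h1
  have hch := choose_le_exp n k hk1 hkn
  have hmain : (k:ℝ) * (Real.log n + 1 - Real.log (k:ℝ)) - (k:ℝ) * Real.log n / 5
      ≤ -(2 * Real.log n) := by
    have hbra : Real.log n + 1 - Real.log (k:ℝ) ≤ Real.log n / 10 := by linarith
    have hb2 : (k:ℝ) * (Real.log n + 1 - Real.log (k:ℝ)) ≤ (k:ℝ) * (Real.log n / 10) :=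
      mul_le_mul_of_nonneg_left hbra hx0.le
    have hxL : (n:ℝ) / (Real.log n) ^ 2 ≤ (k:ℝ) * Real.log n := by
      have h := mul_le_mul_of_nonneg_right hc1 hL0.le
      calc (n:ℝ) / (Real.log n) ^ 2 = (n:ℝ) / (Real.log n) ^ 3 * Real.log n := by
            field_simp
        _ ≤ (k:ℝ) * Real.log n := h
    have h2L : 20 * Real.log n ≤ (n:ℝ) / (Real.log n) ^ 2 := by
      rw [le_div_iff₀ (by positivity)]
      calc 20 * Real.log n * (Real.log n) ^ 2 = 20 * (Real.log n) ^ 3 := by ring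
        _ ≤ (n:ℝ) := h20
    linarith
  calc (n.choose k : ℝ) * Real.exp (-((k:ℝ) * Real.log n / 5))
      ≤ Real.exp ((k:ℝ) * (Real.log n + 1 - Real.log (k:ℝ)))
          * Real.exp (-((k:ℝ) * Real.log n / 5)) :=
        mul_le_mul_of_nonneg_right hch (Real.exp_pos _).le
    _ = Real.exp ((k:ℝ) * (Real.log n + 1 - Real.log (k:ℝ)) - (k:ℝ) * Real.log n / 5) := by
        rw [← Real.exp_add]
        congr 1
    _ ≤ Real.exp (-(2 * Real.log n)) := Real.exp_le_exp.2 hmain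
    _ = 1 / (n:ℝ) ^ 2 := by
        rw [Real.exp_neg, two_mul, Real.exp_add, Real.exp_log hn0]
        rw [inv_eq_one_div, sq]

lemma eventual_bound {n : ℕ} {p : ℝ} (hp0 : 0 ≤ p) (hp1 : p ≤ 1)
    (hL1 : 1 ≤ Real.log n) (hnp : Real.log n ≤ (n:ℝ) * p)
    (h10 : 10 * (1 + 3 * Real.log (Real.log n)) ≤ Real.log n)
    (h20 : 20 * (Real.log n) ^ 3 ≤ (n:ℝ)) :
    grProb n p (fun G => ¬ (∀ S : Finset (Fin n),
        (n : ℝ) / (Real.log n) ^ 3 ≤ (S.card : ℝ) → (S.card : ℝ) ≤ (n : ℝ) / 2 →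
        Real.log n / 10 * S.card ≤ (crossCount G S : ℝ)))
      ≤ 2 / n := by
  have hL0 : (0:ℝ) < Real.log n := by linarith
  have hL3 : (1:ℝ) ≤ (Real.log n) ^ 3 := one_le_pow₀ hL1
  have hn0 : (0:ℝ) < (n:ℝ) := by nlinarith
  have hcongr : grProb n p (fun G => ¬ (∀ S : Finset (Fin n),
        (n : ℝ) / (Real.log n) ^ 3 ≤ (S.card : ℝ) → (S.card : ℝ) ≤ (n : ℝ) / 2 →
        Real.log n / 10 * S.card ≤ (crossCount G S : ℝ)))
      = grProb n p (fun G => ∃ S ∈ (Finset.univ : Finset (Finset (Fin n))),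
          condP n S.card ∧ (crossCount G S : ℝ) < Real.log n / 10 * S.card) := by
    refine grProb_congr fun G => ?_
    constructor
    · intro h
      push_neg at h
      obtain ⟨S, h1, h2, h3⟩ := h
      exact ⟨S, Finset.mem_univ S, ⟨h1, h2⟩, h3⟩
    · rintro ⟨S, -, ⟨h1, h2⟩, h3⟩
      intro h
      exact absurd (h S h1 h2) (not_le.2 h3)
  rw [hcongr]
  have hub := grProb_union_bound hp0 hp1 (Finset.univ : Finset (Finset (Fin n)))
    (fun S G => condP n S.card ∧ (crossCount G S : ℝ) < Real.log n / 10 * S.card)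
  refine hub.trans ?_
  refine (Finset.sum_le_sum fun S _ =>
    grProb_badS_le hp0 hp1 hL1 hnp S).trans ?_
  have hgroup : ∑ S ∈ (Finset.univ : Finset (Finset (Fin n))),
      (if condP n S.card then Real.exp (-((S.card : ℝ) * Real.log n / 5)) else 0)
      = ∑ k ∈ Finset.range (n + 1), (n.choose k) •
        (if condP n k then Real.exp (-((k : ℝ) * Real.log n / 5)) else 0) := by
    rw [← Finset.powerset_univ, Finset.sum_powerset_apply_card
      (f := fun k => if condP n k then Real.exp (-((k : ℝ) * Real.log n / 5)) else 0),
      Finset.card_univ, Fintype.card_fin]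
  rw [hgroup]
  have hterm : ∀ k ∈ Finset.range (n + 1), (n.choose k) •
      (if condP n k then Real.exp (-((k : ℝ) * Real.log n / 5)) else 0) ≤ 1 / (n:ℝ) ^ 2 := by
    intro k _
    rw [nsmul_eq_mul]
    split_ifs with hc
    · exact term_bound hL1 h10 h20 hc
    · rw [mul_zero]
      positivity
  calc ∑ k ∈ Finset.range (n + 1), (n.choose k) •
        (if condP n k then Real.exp (-((k : ℝ) * Real.log n / 5)) else 0)
      ≤ ∑ _k ∈ Finset.range (n + 1), 1 / (n:ℝ) ^ 2 := Finset.sum_le_sum hterm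
    _ = ((n:ℝ) + 1) * (1 / (n:ℝ) ^ 2) := by
        rw [Finset.sum_const, Finset.card_range, nsmul_eq_mul]
        push_cast
        ring
    _ ≤ 2 / n := by
        have h1 : (1:ℝ) ≤ (n:ℝ) := by
          have : 0 < n := by exact_mod_cast hn0
          exact_mod_cast this
        have key : 2 / (n:ℝ) - ((n:ℝ) + 1) * (1 / (n:ℝ) ^ 2) = ((n:ℝ) - 1) / (n:ℝ) ^ 2 := by
          field_simp
          ring
        have hnn : (0:ℝ) ≤ ((n:ℝ) - 1) / (n:ℝ) ^ 2 :=
          div_nonneg (by linarith) (by positivity)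
        linarith

end AAS


theorem aas_expansion_medium_sets (p : ℕ → ℝ) (hp0 : ∀ n, 0 ≤ p n) (hp1 : ∀ n, p n ≤ 1)
    (hlow : Filter.Tendsto (fun n : ℕ => (n : ℝ) * p n - Real.log n) Filter.atTop Filter.atTop)
    (hhigh : ∀ᶠ n : ℕ in Filter.atTop, p n ≤ 1.1 * Real.log n / n) :
    Filter.Tendsto
      (fun n : ℕ => grProb n (p n) fun G =>
        ∀ S : Finset (Fin n),
          (n : ℝ) / (Real.log n) ^ 3 ≤ (S.card : ℝ) → (S.card : ℝ) ≤ (n : ℝ) / 2 →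
          Real.log n / 10 * S.card ≤ (crossCount G S : ℝ))
      Filter.atTop (nhds 1) := by
  have hlogn : Filter.Tendsto (fun n : ℕ => Real.log n) Filter.atTop Filter.atTop :=
    Real.tendsto_log_atTop.comp tendsto_natCast_atTop_atTop
  have hE1 : ∀ᶠ n : ℕ in Filter.atTop, 1 ≤ Real.log n := hlogn.eventually_ge_atTop 1
  have hE2 : ∀ᶠ n : ℕ in Filter.atTop, Real.log n ≤ (n:ℝ) * p n :=
    (hlow.eventually_ge_atTop 0).mono fun n h => by linarith
  have evR3 : ∀ᶠ x : ℝ in Filter.atTop, 10 * (1 + 3 * Real.log x) ≤ x := by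
    have h := Real.isLittleO_log_id_atTop.def (by norm_num : (0:ℝ) < 1/60)
    filter_upwards [h, Filter.eventually_ge_atTop (20:ℝ)] with x hx hx20
    rw [Real.norm_eq_abs, id, Real.norm_eq_abs] at hx
    have h1 : Real.log x ≤ |Real.log x| := le_abs_self _
    have h2 : |x| = x := abs_of_nonneg (by linarith)
    rw [h2] at hx
    linarith
  have hE3 : ∀ᶠ n : ℕ in Filter.atTop,
      10 * (1 + 3 * Real.log (Real.log n)) ≤ Real.log n := hlogn.eventually evR3
  have evR4 : ∀ᶠ x : ℝ in Filter.atTop, 20 * (Real.log x) ^ 3 ≤ x := by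
    have h := (Real.isLittleO_pow_log_id_atTop (n := 3)).def (by norm_num : (0:ℝ) < 1/20)
    filter_upwards [h, Filter.eventually_ge_atTop (0:ℝ)] with x hx hx0
    rw [Real.norm_eq_abs, id, Real.norm_eq_abs] at hx
    have h1 : (Real.log x) ^ 3 ≤ |(Real.log x) ^ 3| := le_abs_self _
    have h2 : |x| = x := abs_of_nonneg hx0
    rw [h2] at hx
    linarith
  have hE4 : ∀ᶠ n : ℕ in Filter.atTop, 20 * (Real.log n) ^ 3 ≤ (n:ℝ) :=
    (tendsto_natCast_atTop_atTop (R := ℝ)).eventually evR4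
  have hb : Filter.Tendsto (fun n : ℕ => grProb n (p n) (fun G =>
      ¬ (∀ S : Finset (Fin n),
        (n : ℝ) / (Real.log n) ^ 3 ≤ (S.card : ℝ) → (S.card : ℝ) ≤ (n : ℝ) / 2 →
        Real.log n / 10 * S.card ≤ (crossCount G S : ℝ)))) Filter.atTop (nhds 0) := by
    refine squeeze_zero' ?_ ?_ (tendsto_const_div_atTop_nhds_zero_nat 2)
    · exact Filter.Eventually.of_forall fun n => AAS.grProb_nonneg (hp0 n) (hp1 n) _
    · filter_upwards [hE1, hE2, hE3, hE4] with n h1 h2 h3 h4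
      exact AAS.eventual_bound (hp0 n) (hp1 n) h1 h2 h3 h4
  have heq : (fun n : ℕ => grProb n (p n) fun G =>
      ∀ S : Finset (Fin n),
        (n : ℝ) / (Real.log n) ^ 3 ≤ (S.card : ℝ) → (S.card : ℝ) ≤ (n : ℝ) / 2 →
        Real.log n / 10 * S.card ≤ (crossCount G S : ℝ))
      = fun n : ℕ => 1 - grProb n (p n) (fun G =>
      ¬ (∀ S : Finset (Fin n),
        (n : ℝ) / (Real.log n) ^ 3 ≤ (S.card : ℝ) → (S.card : ℝ) ≤ (n : ℝ) / 2 →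
        Real.log n / 10 * S.card ≤ (crossCount G S : ℝ))) :=
    funext fun n => AAS.grProb_compl _
  rw [heq]
  have := (tendsto_const_nhds (x := (1:ℝ)) (f := Filter.atTop (α := ℕ))).sub hb
  simpa using this
end

section
/- Let G be a graph on n vertices with minimum degree δ, and suppose: (a) every vertex of degree > log n/6 in a set S₁ ⊆ V with |S₁| ≤ n/(log n)³ satisfies |E(S₁, S̄₁)| ≥ (log n/10)|S₁|; (b) no two vertices of degree ≤ log n/6 are adjacent or share a common neighbor; (c) δ ≤ log n/30. Then for every vertex set S with 1 ≤ |S| ≤ n/(log n)³, |E(S, S̄)| ≥ δ·|S|. -/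
open scoped Classical
open Filter

theorem expansion_all_small_sets {V : Type*} [Fintype V] (G : SimpleGraph V)
    (n : ℕ) (hn : n = Fintype.card V) (hbig : Real.exp 30 ≤ (n : ℝ))
    (ha : ∀ S₁ : Finset V, S₁.Nonempty →
      (∀ v ∈ S₁, Real.log n / 6 < (G.degree v : ℝ)) →
      (S₁.card : ℝ) ≤ (n : ℝ) / (Real.log n) ^ 3 →
      Real.log n / 10 * S₁.card ≤ (crossCount G S₁ : ℝ))
    (hb : ∀ u v : V, u ≠ v → (G.degree u : ℝ) ≤ Real.log n / 6 →
      (G.degree v : ℝ) ≤ Real.log n / 6 →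
      ¬ G.Adj u v ∧ ∀ w, ¬ (G.Adj u w ∧ G.Adj v w))
    (hc : (G.minDegree : ℝ) ≤ Real.log n / 30) :
    ∀ S : Finset V, S.Nonempty → (S.card : ℝ) ≤ (n : ℝ) / (Real.log n) ^ 3 →
      G.minDegree * S.card ≤ crossCount G S := by
  classical
  intro S hS hScard
  obtain ⟨v0, hv0⟩ := hS
  haveI : Nonempty V := ⟨v0⟩
  have hlog : (30:ℝ) ≤ Real.log n := by
    calc (30:ℝ) = Real.log (Real.exp 30) := (Real.log_exp 30).symm
    _ ≤ Real.log n := Real.log_le_log (Real.exp_pos _) hbig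
  set A := S.filter (fun v => (G.degree v : ℝ) ≤ Real.log n / 6) with hAdef
  set B := S.filter (fun v => ¬ (G.degree v : ℝ) ≤ Real.log n / 6) with hBdef
  have hSAB : A ∪ B = S := Finset.filter_union_filter_not_eq _ S
  have hdisAB : Disjoint A B := Finset.disjoint_filter_filter_not S S _
  have hcardAB : A.card + B.card = S.card := Finset.card_filter_add_card_filter_not _
  have crossEq : ∀ T : Finset V, crossCount G T = ∑ v ∈ T, ((Tᶜ).filter (G.Adj v)).card := by
    intro T
    unfold crossCount
    rw [Finset.card_filter, Finset.sum_product]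
    exact Finset.sum_congr rfl fun v _ => (Finset.card_filter _ _).symm
  have degsplit : ∀ (T : Finset V) (v : V),
      (T.filter (G.Adj v)).card + ((Tᶜ).filter (G.Adj v)).card = G.degree v := by
    intro T v
    rw [← Finset.card_union_of_disjoint
        (Finset.disjoint_filter_filter disjoint_compl_right),
      ← Finset.filter_union, Finset.union_compl]
    simp [SimpleGraph.degree, SimpleGraph.neighborFinset_eq_filter]
  -- claim 1 : for v ∈ A, degree v = inB v + out v
  have claim1 : ∀ v ∈ A, G.degree v = (B.filter (G.Adj v)).card + ((Sᶜ).filter (G.Adj v)).card := by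
    intro v hv
    rw [← degsplit S v]
    congr 1
    have hAe : A.filter (G.Adj v) = ∅ := by
      rw [Finset.filter_eq_empty_iff]
      intro u hu hadj
      rcases eq_or_ne v u with rfl | hne
      · exact G.irrefl hadj
      · have hvS := (Finset.mem_filter.mp hv).2
        have huS := (Finset.mem_filter.mp hu).2
        exact (hb v u hne hvS huS).1 hadj
    rw [← hSAB, Finset.filter_union, hAe, Finset.empty_union]
  -- claim 2 : Bᶜ = Sᶜ ∪ A, hence crossCount of B relates to out
  have hBc : Bᶜ = Sᶜ ∪ A := by
    ext u
    simp only [Finset.mem_compl, Finset.mem_union, hBdef, hAdef, Finset.mem_filter]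
    tauto
  have claim2 : ∀ v ∈ B, ((Bᶜ).filter (G.Adj v)).card
      = ((Sᶜ).filter (G.Adj v)).card + (A.filter (G.Adj v)).card := by
    intro v _
    rw [hBc, Finset.filter_union, Finset.card_union_of_disjoint]
    exact Finset.disjoint_filter_filter
      (disjoint_compl_right.symm.mono_right (Finset.filter_subset _ S))
  -- E : edges between A and B, double counting
  have claim3 : ∑ v ∈ A, (B.filter (G.Adj v)).card = ∑ u ∈ B, (A.filter (G.Adj u)).card := by
    simp only [Finset.card_filter]
    rw [Finset.sum_comm]
    exact Finset.sum_congr rfl fun u _ => Finset.sum_congr rfl fun v _ => by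
      rw [G.adj_comm]
  set E : ℕ := ∑ u ∈ B, (A.filter (G.Adj u)).card with hEdef
  -- E ≤ |B|
  have claim4 : E ≤ B.card := by
    have h1 : ∀ u ∈ B, (A.filter (G.Adj u)).card ≤ 1 := by
      intro u hu
      rw [Finset.card_le_one]
      intro v hv w hw
      by_contra hne
      have hvA := Finset.mem_filter.mp (Finset.mem_filter.mp hv).1
      have hwA := Finset.mem_filter.mp (Finset.mem_filter.mp hw).1
      have hadjv := (Finset.mem_filter.mp hv).2
      have hadjw := (Finset.mem_filter.mp hw).2
      exact (hb v w hne hvA.2 hwA.2).2 u ⟨G.adj_symm hadjv, G.adj_symm hadjw⟩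
    calc E ≤ ∑ _u ∈ B, 1 := Finset.sum_le_sum h1
      _ = B.card := by simp
  -- main counting identity : crossCount S + 2E = ∑_A deg + crossCount B
  have keyNat : crossCount G S + 2 * E = (∑ v ∈ A, G.degree v) + crossCount G B := by
    have split : ∀ f : V → ℕ, ∑ v ∈ S, f v = ∑ v ∈ A, f v + ∑ v ∈ B, f v := by
      intro f; rw [← hSAB, Finset.sum_union hdisAB]
    rw [crossEq S, crossEq B, split]
    rw [Finset.sum_congr rfl claim1, Finset.sum_add_distrib]
    rw [Finset.sum_congr rfl claim2, Finset.sum_add_distrib]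
    rw [claim3, ← hEdef]
    ring
  -- ∑_A deg ≥ δ |A|
  have hdegA : (G.minDegree : ℝ) * A.card ≤ ∑ v ∈ A, (G.degree v : ℝ) := by
    calc (G.minDegree : ℝ) * A.card = ∑ _v ∈ A, (G.minDegree : ℝ) := by
          rw [Finset.sum_const, nsmul_eq_mul, mul_comm]
      _ ≤ ∑ v ∈ A, (G.degree v : ℝ) :=
        Finset.sum_le_sum fun v _ => by exact_mod_cast G.minDegree_le_degree v
  -- crossCount B ≥ (log n / 10) |B|
  have hcrossB : Real.log n / 10 * B.card ≤ (crossCount G B : ℝ) := by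
    rcases B.eq_empty_or_nonempty with hBe | hBne
    · simp [hBe]
    · refine ha B hBne (fun v hv => ?_) ?_
      · exact lt_of_not_ge (Finset.mem_filter.mp hv).2
      · calc (B.card : ℝ) ≤ S.card := by
              exact_mod_cast Finset.card_le_card (Finset.filter_subset _ S)
          _ ≤ _ := hScard
  -- put together in ℝ
  have hkeyR : (crossCount G S : ℝ) + 2 * E = (∑ v ∈ A, (G.degree v : ℝ)) + crossCount G B := by
    exact_mod_cast congrArg (Nat.cast : ℕ → ℝ) keyNat
  have hEb : (E : ℝ) ≤ B.card := by exact_mod_cast claim4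
  have hfinal : (G.minDegree : ℝ) * S.card ≤ (crossCount G S : ℝ) := by
    have hSc : (S.card : ℝ) = A.card + B.card := by exact_mod_cast hcardAB.symm
    have hδ2 : (G.minDegree : ℝ) ≤ Real.log n / 10 - 2 := by linarith
    have hb0 : (0:ℝ) ≤ (B.card : ℝ) := by positivity
    have hmul : (G.minDegree : ℝ) * B.card ≤ (Real.log n / 10 - 2) * B.card :=
      mul_le_mul_of_nonneg_right hδ2 hb0
    have hexp : (G.minDegree : ℝ) * S.card
        = (G.minDegree : ℝ) * A.card + (G.minDegree : ℝ) * B.card := by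
      rw [hSc]; ring
    linarith [hdegA, hcrossB, hkeyR, hEb, hmul]
  exact_mod_cast hfinal
end

section
/- Let G be a graph on n vertices with minimum degree δ such that every nonempty vertex set S with |S| ≤ n/2 satisfies |E(S, S̄)| ≥ δ·|S|. Then for every partition P = {V₁,…,V_t} of V in which the largest part has at least n/2 vertices, the number of crossing edges of P is at least δ·(t-1). -/
open scoped Classical
open Filter

theorem partition_crossing_big_part {V : Type*} [Fintype V] (G : SimpleGraph V)
    (n : ℕ) (hn : n = Fintype.card V)
    (hS : ∀ S : Finset V, S.Nonempty → (S.card : ℝ) ≤ (n : ℝ) / 2 →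
      G.minDegree * S.card ≤ crossCount G S)
    (P : Finpartition (Finset.univ : Finset V))
    (hbig : ∃ t ∈ P.parts, (n : ℝ) / 2 ≤ (t.card : ℝ)) :
    G.minDegree * (P.parts.card - 1) ≤ partCross G P := by
  obtain ⟨T, hT, hTbig⟩ := hbig
  rcases le_or_gt P.parts.card 1 with h1 | h2
  · simp [Nat.sub_eq_zero_of_le h1]
  -- Tᶜ is nonempty
  have hTne : T.Nonempty := P.nonempty_of_mem_parts hT
  have hsum : ∑ p ∈ P.parts, p.card = Fintype.card V := by
    simpa using P.sum_card_parts
  have hcardTc : Tᶜ.card = n - T.card := by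
    rw [Finset.card_compl, hn]
  -- the other parts sit inside Tᶜ
  have herase : ∑ p ∈ P.parts.erase T, p.card = Fintype.card V - T.card := by
    have h := Finset.sum_erase_add P.parts (fun p => p.card) hT
    have hTn : T.card ≤ Fintype.card V := Finset.card_le_univ T
    omega
  have hparts_le : P.parts.card - 1 ≤ Tᶜ.card := by
    have h1le : ∀ p ∈ P.parts.erase T, 1 ≤ p.card := by
      intro p hp
      exact Finset.card_pos.2 (P.nonempty_of_mem_parts (Finset.mem_of_mem_erase hp))
    have := Finset.card_nsmul_le_sum (P.parts.erase T) (fun p => p.card) 1 h1le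
    simp only [smul_eq_mul, mul_one] at this
    rw [Finset.card_erase_of_mem hT] at this
    rw [hcardTc, hn]
    omega
  have hTcne : Tᶜ.Nonempty := by
    rw [← Finset.card_pos]
    omega
  have hTchalf : (Tᶜ.card : ℝ) ≤ (n : ℝ) / 2 := by
    have hTn : T.card ≤ n := by rw [hn]; exact Finset.card_le_univ T
    rw [hcardTc]
    push_cast [Nat.cast_sub hTn]
    linarith
  have hmain := hS Tᶜ hTcne hTchalf
  -- crossCount G Tᶜ ≤ partCross G P
  have hcc : crossCount G Tᶜ ≤ partCross G P := by
    unfold crossCount partCross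
    apply Finset.card_le_card_of_injOn (fun e : V × V => Sym2.mk e.1 e.2)
    · rintro ⟨a, b⟩ hab
      simp only [Finset.mem_coe, Finset.mem_filter, Finset.mem_product, Finset.mem_compl, compl_compl] at hab
      obtain ⟨⟨ha, hb⟩, hadj⟩ := hab
      simp only [Finset.mem_coe, Finset.mem_filter, SimpleGraph.mem_edgeFinset]
      refine ⟨hadj, ?_⟩
      intro t ht hall
      have hat : a ∈ t := hall a (by simp)
      have hbt : b ∈ t := hall b (by simp)
      have : t = T := P.eq_of_mem_parts ht hT hbt hb
      rw [this] at hat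
      exact ha hat
    · rintro ⟨a, b⟩ hab ⟨c, d⟩ hcd heq
      simp only [Finset.mem_coe, Finset.mem_filter, Finset.mem_product, Finset.mem_compl] at hab hcd
      push_neg at hab hcd
      simp only [Sym2.eq_iff, Prod.mk.injEq, Prod.swap_prod_mk] at heq
      rcases heq with ⟨h1, h2⟩ | ⟨h1, h2⟩
      · simp [h1, h2]
      · exfalso
        subst h1; subst h2
        exact hab.1.1 hcd.1.2
  calc G.minDegree * (P.parts.card - 1) ≤ G.minDegree * Tᶜ.card :=
        Nat.mul_le_mul_left _ hparts_le
    _ ≤ crossCount G Tᶜ := hmain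
    _ ≤ partCross G P := hcc
end

section
/- For p = p(n) ≥ (51 log n)/n, asymptotically almost surely the random graph G ~ G(n,p) satisfies σ(G) < δ(G), i.e., its spanning tree packing number is strictly less than its minimum degree. -/
open scoped Classical
open Filter

namespace ErP
variable {n : ℕ} {p : ℝ}

/-! ### The product model: sums over graphs as sums over edge subsets -/

noncomputable abbrev D (n : ℕ) : Finset (Sym2 (Fin n)) := (⊤ : SimpleGraph (Fin n)).edgeFinset

noncomputable def w (n : ℕ) (p : ℝ) (G : SimpleGraph (Fin n)) : ℝ :=
  p ^ edgeCount G * (1 - p) ^ (n.choose 2 - edgeCount G)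

lemma w_nonneg (hp0 : 0 ≤ p) (hp1 : p ≤ 1) (G : SimpleGraph (Fin n)) : 0 ≤ w n p G :=
  mul_nonneg (pow_nonneg hp0 _) (pow_nonneg (by linarith) _)

lemma grProb_eq (Q : SimpleGraph (Fin n) → Prop) :
    grProb n p Q = ∑ G : SimpleGraph (Fin n), if Q G then w n p G else 0 := rfl

lemma card_D : (D n).card = n.choose 2 := by
  simpa using SimpleGraph.card_edgeFinset_top_eq_card_choose_two (V := Fin n)

lemma sum_graphs_eq (F : Finset (Sym2 (Fin n)) → ℝ) :
    ∑ G : SimpleGraph (Fin n), F G.edgeFinset = ∑ s ∈ (D n).powerset, F s := by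
  refine Finset.sum_nbij' (fun G => G.edgeFinset) (fun s => SimpleGraph.fromEdgeSet ↑s)
    ?_ ?_ ?_ ?_ ?_
  · intro G _
    exact Finset.mem_powerset.2 (SimpleGraph.edgeFinset_mono le_top)
  · intro s _; exact Finset.mem_univ _
  · intro G _
    show SimpleGraph.fromEdgeSet ↑G.edgeFinset = G
    rw [SimpleGraph.coe_edgeFinset, SimpleGraph.fromEdgeSet_edgeSet]
  · intro s hs
    rw [Finset.mem_powerset] at hs
    apply Finset.coe_injective
    rw [SimpleGraph.coe_edgeFinset, SimpleGraph.edgeSet_fromEdgeSet]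
    rw [sdiff_eq_left]
    rw [Set.disjoint_left]
    intro e hes hed
    have := hs hes
    rw [SimpleGraph.mem_edgeFinset, SimpleGraph.edgeSet_top] at this
    exact this hed
  · intro G _; rfl

lemma exp_pow (t : ℝ) (A : Finset (Sym2 (Fin n))) (hA : A ⊆ D n) :
    ∑ G : SimpleGraph (Fin n), w n p G * t ^ (G.edgeFinset ∩ A).card
      = (1 - p + p * t) ^ A.card := by
  have key : ∀ s ∈ (D n).powerset,
      (p ^ s.card * (1 - p) ^ (n.choose 2 - s.card)) * t ^ (s ∩ A).card
        = (∏ e ∈ s, (if e ∈ A then p * t else p)) * ∏ e ∈ (D n) \ s, (1 - p) := by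
    intro s hs
    rw [Finset.mem_powerset] at hs
    have h1 : ∏ e ∈ s, (if e ∈ A then p * t else p)
        = (p * t) ^ (s ∩ A).card * p ^ (s \ A).card := by
      rw [Finset.prod_ite, Finset.prod_const, Finset.prod_const,
        Finset.filter_mem_eq_inter, ← Finset.sdiff_eq_filter]
    have h2 : (s ∩ A).card + (s \ A).card = s.card := Finset.card_inter_add_card_sdiff s A
    have h3 : ((D n) \ s).card = n.choose 2 - s.card := by
      rw [Finset.card_sdiff_of_subset hs, card_D]
    rw [h1, Finset.prod_const, h3]
    rw [mul_pow, ← h2, pow_add]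
    ring
  calc ∑ G : SimpleGraph (Fin n), w n p G * t ^ (G.edgeFinset ∩ A).card
      = ∑ s ∈ (D n).powerset,
          (p ^ s.card * (1 - p) ^ (n.choose 2 - s.card)) * t ^ (s ∩ A).card :=
        sum_graphs_eq (fun s => (p ^ s.card * (1 - p) ^ (n.choose 2 - s.card)) * t ^ (s ∩ A).card)
    _ = ∑ s ∈ (D n).powerset,
          (∏ e ∈ s, (if e ∈ A then p * t else p)) * ∏ e ∈ (D n) \ s, (1 - p) :=
        Finset.sum_congr rfl key
    _ = ∏ e ∈ D n, ((if e ∈ A then p * t else p) + (1 - p)) :=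
        (Finset.prod_add _ _ _).symm
    _ = ∏ e ∈ D n, (if e ∈ A then 1 - p + p * t else 1) := by
        apply Finset.prod_congr rfl; intro e _
        split <;> ring
    _ = (1 - p + p * t) ^ A.card := by
        rw [Finset.prod_ite, Finset.prod_const, Finset.prod_const, one_pow, mul_one,
          Finset.filter_mem_eq_inter, Finset.inter_eq_right.2 hA]

lemma sum_w_eq_one : ∑ G : SimpleGraph (Fin n), w n p G = 1 := by
  have := exp_pow (n := n) (p := p) 1 ∅ (Finset.empty_subset _)
  simpa using this

lemma exp_pow_edgeCount (t : ℝ) :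
    ∑ G : SimpleGraph (Fin n), w n p G * t ^ edgeCount G
      = (1 - p + p * t) ^ n.choose 2 := by
  have := exp_pow (n := n) (p := p) t (D n) (subset_refl _)
  rw [card_D] at this
  rw [← this]
  apply Finset.sum_congr rfl
  intro G _
  congr 2
  rw [Finset.inter_eq_left.2 (SimpleGraph.edgeFinset_mono le_top)]
  rfl

/-! ### Incidence sets and degrees -/

noncomputable abbrev Av (n : ℕ) (v : Fin n) : Finset (Sym2 (Fin n)) :=
  (D n).filter (fun e => v ∈ e)

lemma inter_Av (G : SimpleGraph (Fin n)) (v : Fin n) :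
    (G.edgeFinset ∩ Av n v).card = G.degree v := by
  have h1 : G.edgeFinset ∩ Av n v = G.incidenceFinset v := by
    rw [SimpleGraph.incidenceFinset_eq_filter]
    ext e
    simp only [Finset.mem_inter, Finset.mem_filter, SimpleGraph.mem_edgeFinset]
    constructor
    · rintro ⟨h, _, hv⟩; exact ⟨h, hv⟩
    · rintro ⟨h, hv⟩
      exact ⟨h, by simpa using (SimpleGraph.edgeFinset_mono (le_top : G ≤ ⊤)) (by simpa using h), hv⟩
  rw [h1, SimpleGraph.card_incidenceFinset_eq_degree]

lemma card_Av (v : Fin n) : (Av n v).card = n - 1 := by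
  have h1 : Av n v = (⊤ : SimpleGraph (Fin n)).incidenceFinset v := by
    rw [SimpleGraph.incidenceFinset_eq_filter]
  rw [h1, SimpleGraph.card_incidenceFinset_eq_degree]
  simp [SimpleGraph.complete_graph_degree]

lemma exp_pow_degree (t : ℝ) (v : Fin n) :
    ∑ G : SimpleGraph (Fin n), w n p G * t ^ G.degree v
      = (1 - p + p * t) ^ (n - 1) := by
  have := exp_pow (n := n) (p := p) t (Av n v) (Finset.filter_subset _ _)
  rw [card_Av] at this
  rw [← this]
  apply Finset.sum_congr rfl
  intro G _
  rw [inter_Av]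

/-! ### Basic properties of grProb -/

lemma grProb_nonneg (hp0 : 0 ≤ p) (hp1 : p ≤ 1) (Q : SimpleGraph (Fin n) → Prop) :
    0 ≤ grProb n p Q := by
  rw [grProb_eq]
  apply Finset.sum_nonneg
  intro G _
  split
  · exact w_nonneg hp0 hp1 G
  · exact le_refl _

lemma grProb_mono (hp0 : 0 ≤ p) (hp1 : p ≤ 1) {Q R : SimpleGraph (Fin n) → Prop}
    (h : ∀ G, Q G → R G) : grProb n p Q ≤ grProb n p R := by
  rw [grProb_eq, grProb_eq]
  apply Finset.sum_le_sum
  intro G _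
  by_cases hq : Q G
  · rw [if_pos hq, if_pos (h G hq)]
  · rw [if_neg hq]
    split
    · exact w_nonneg hp0 hp1 G
    · exact le_refl _

lemma grProb_le_one (hp0 : 0 ≤ p) (hp1 : p ≤ 1) (Q : SimpleGraph (Fin n) → Prop) :
    grProb n p Q ≤ 1 := by
  calc grProb n p Q ≤ grProb n p (fun _ => True) := grProb_mono hp0 hp1 (fun G _ => trivial)
    _ = 1 := by rw [grProb_eq]; simpa using sum_w_eq_one (n := n) (p := p)

/-- union-type bound: indicator of Q₁ is at least 1 - [Q₂] - [Q₃] pointwise. -/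
lemma one_le_grProb_add (hp0 : 0 ≤ p) (hp1 : p ≤ 1)
    {Q₁ Q₂ Q₃ : SimpleGraph (Fin n) → Prop}
    (h : ∀ G, ¬Q₂ G → ¬Q₃ G → Q₁ G) :
    1 ≤ grProb n p Q₁ + grProb n p Q₂ + grProb n p Q₃ := by
  rw [grProb_eq, grProb_eq, grProb_eq, ← Finset.sum_add_distrib, ← Finset.sum_add_distrib]
  rw [← sum_w_eq_one (n := n) (p := p)]
  apply Finset.sum_le_sum
  intro G _
  have hw := w_nonneg hp0 hp1 G
  have n1 : (0:ℝ) ≤ if Q₁ G then w n p G else 0 := by split <;> simp [hw]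
  have n2 : (0:ℝ) ≤ if Q₂ G then w n p G else 0 := by split <;> simp [hw]
  have n3 : (0:ℝ) ≤ if Q₃ G then w n p G else 0 := by split <;> simp [hw]
  by_cases h2 : Q₂ G
  · rw [if_pos h2]; linarith
  by_cases h3 : Q₃ G
  · rw [if_pos h3]; linarith
  · rw [if_pos (h G h2 h3)]; linarith

lemma grProb_exists_le (hp0 : 0 ≤ p) (hp1 : p ≤ 1)
    (Q : Fin n → SimpleGraph (Fin n) → Prop) :
    grProb n p (fun G => ∃ v, Q v G) ≤ ∑ v : Fin n, grProb n p (Q v) := by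
  simp only [grProb_eq]
  rw [Finset.sum_comm]
  apply Finset.sum_le_sum
  intro G _
  have hw := w_nonneg hp0 hp1 G
  by_cases h : ∃ v, Q v G
  · rw [if_pos h]
    obtain ⟨v, hv⟩ := h
    calc w n p G = (if Q v G then w n p G else 0) := by rw [if_pos hv]
      _ ≤ ∑ v' : Fin n, (if Q v' G then w n p G else 0) := by
          apply Finset.single_le_sum (f := fun v' => if Q v' G then w n p G else 0)
          · intro i _; split <;> simp [hw]
          · exact Finset.mem_univ v
  · rw [if_neg h]
    apply Finset.sum_nonneg
    intro i _; split <;> simp [hw]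

/-! ### Markov-type tail bounds -/

lemma edge_upper_tail (hp0 : 0 ≤ p) (hp1 : p ≤ 1) {μ : ℝ} (hμ : 1 ≤ μ) (b : ℕ) :
    grProb n p (fun G => b ≤ edgeCount G) ≤ (1 - p + p * μ) ^ n.choose 2 / μ ^ b := by
  have hμ0 : (0:ℝ) < μ := lt_of_lt_of_le one_pos hμ
  have key : grProb n p (fun G => b ≤ edgeCount G)
      ≤ (∑ G : SimpleGraph (Fin n), w n p G * μ ^ edgeCount G) / μ ^ b := by
    rw [grProb_eq, Finset.sum_div]
    apply Finset.sum_le_sum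
    intro G _
    have hw := w_nonneg hp0 hp1 G
    split
    · rename_i hbm
      have h1 : (1:ℝ) ≤ μ ^ edgeCount G / μ ^ b := by
        rw [le_div_iff₀ (by positivity), one_mul]
        exact pow_le_pow_right₀ hμ hbm
      calc w n p G = w n p G * 1 := (mul_one _).symm
        _ ≤ w n p G * (μ ^ edgeCount G / μ ^ b) := mul_le_mul_of_nonneg_left h1 hw
        _ = w n p G * μ ^ edgeCount G / μ ^ b := by ring
    · positivity
  rw [exp_pow_edgeCount] at key
  exact key

lemma degree_lower_tail (hp0 : 0 ≤ p) (hp1 : p ≤ 1) {l : ℝ} (hl0 : 0 < l) (hl1 : l ≤ 1)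
    (a : ℕ) (v : Fin n) :
    grProb n p (fun G => G.degree v ≤ a) ≤ (1 - p + p * l) ^ (n - 1) / l ^ a := by
  have key : grProb n p (fun G => G.degree v ≤ a)
      ≤ (∑ G : SimpleGraph (Fin n), w n p G * l ^ G.degree v) / l ^ a := by
    rw [grProb_eq, Finset.sum_div]
    apply Finset.sum_le_sum
    intro G _
    have hw := w_nonneg hp0 hp1 G
    split
    · rename_i hbm
      have h1 : (1:ℝ) ≤ l ^ G.degree v / l ^ a := by
        rw [le_div_iff₀ (by positivity), one_mul]
        exact pow_le_pow_of_le_one hl0.le hl1 hbm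
      calc w n p G = w n p G * 1 := (mul_one _).symm
        _ ≤ w n p G * (l ^ G.degree v / l ^ a) := mul_le_mul_of_nonneg_left h1 hw
        _ = w n p G * l ^ G.degree v / l ^ a := by ring
    · positivity
  rw [exp_pow_degree] at key
  exact key

/-! ### Numeric bounds on exp -/

lemma exp_quarter_le : Real.exp (1/4) ≤ 257 / 200 := by
  have h4 : Real.exp (1/4) ^ 4 = Real.exp 1 := by
    rw [← Real.exp_nat_mul]; norm_num
  have he : Real.exp 1 < 2.7182818286 := Real.exp_one_lt_d9
  have hlt : Real.exp (1/4) ^ 4 < (257/200 : ℝ) ^ 4 := by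
    rw [h4]
    have : (2.7182818286 : ℝ) ≤ (257/200 : ℝ) ^ 4 := by norm_num
    linarith
  exact le_of_lt (lt_of_pow_lt_pow_left₀ 4 (by norm_num) hlt)

lemma le_exp_quarter : (32 / 25 : ℝ) ≤ Real.exp (1/4) := by
  have h4 : Real.exp (1/4) ^ 4 = Real.exp 1 := by
    rw [← Real.exp_nat_mul]; norm_num
  have he : (2.7182818283 : ℝ) < Real.exp 1 := Real.exp_one_gt_d9
  have hlt : (32/25 : ℝ) ^ 4 < Real.exp (1/4) ^ 4 := by
    rw [h4]
    have : ((32:ℝ)/25) ^ 4 ≤ 2.7182818283 := by norm_num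
    linarith
  exact le_of_lt (lt_of_pow_lt_pow_left₀ 4 (Real.exp_pos _).le hlt)

lemma exp_neg_quarter_le : Real.exp (-(1/4)) ≤ 25 / 32 := by
  rw [Real.exp_neg]
  have h : ((32:ℝ)/25)⁻¹ = 25/32 := by norm_num
  rw [← h]
  exact inv_anti₀ (by norm_num) le_exp_quarter

/-! ### Explicit tail bounds -/

lemma tailB1 (hp0 : 0 ≤ p) (hp1 : p ≤ 1) :
    grProb n p (fun G => 6 / 5 * (n.choose 2 : ℝ) * p ≤ (edgeCount G : ℝ))
      ≤ Real.exp (-(3/200) * (n.choose 2 : ℝ) * p) := by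
  have hN0 : (0:ℝ) ≤ (n.choose 2 : ℝ) := Nat.cast_nonneg _
  set N : ℝ := (n.choose 2 : ℝ) with hN
  set b : ℕ := ⌈6 / 5 * N * p⌉₊ with hb
  have hmono : grProb n p (fun G => 6 / 5 * N * p ≤ (edgeCount G : ℝ))
      ≤ grProb n p (fun G => b ≤ edgeCount G) := by
    apply grProb_mono hp0 hp1
    intro G hG
    exact Nat.ceil_le.2 hG
  have hμ : (1:ℝ) ≤ Real.exp (1/4) := Real.one_le_exp (by norm_num)
  have htail := edge_upper_tail (n := n) hp0 hp1 hμ b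
  have hnum : (1 - p + p * Real.exp (1/4)) ^ n.choose 2
      ≤ Real.exp (57 / 200 * N * p) := by
    have hbase0 : 0 ≤ 1 - p + p * Real.exp (1/4) := by nlinarith [Real.exp_pos (1/4:ℝ)]
    have hbase : 1 - p + p * Real.exp (1/4) ≤ Real.exp (57 / 200 * p) := by
      have h1 : p * Real.exp (1/4) ≤ p * (257/200) :=
        mul_le_mul_of_nonneg_left exp_quarter_le hp0
      have h2 : 57 / 200 * p + 1 ≤ Real.exp (57 / 200 * p) := Real.add_one_le_exp _
      linarith
    calc (1 - p + p * Real.exp (1/4)) ^ n.choose 2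
        ≤ Real.exp (57 / 200 * p) ^ n.choose 2 := pow_le_pow_left₀ hbase0 hbase _
      _ = Real.exp (57 / 200 * N * p) := by
          rw [← Real.exp_nat_mul]
          congr 1
          rw [hN]; ring
  have hden : Real.exp (6 / 5 * N * p / 4) ≤ Real.exp (1/4) ^ b := by
    rw [← Real.exp_nat_mul]
    apply Real.exp_le_exp.2
    have hceil := Nat.le_ceil (6 / 5 * N * p)
    rw [← hb] at hceil
    linarith
  calc grProb n p (fun G => 6 / 5 * N * p ≤ (edgeCount G : ℝ))
      ≤ grProb n p (fun G => b ≤ edgeCount G) := hmono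
    _ ≤ (1 - p + p * Real.exp (1/4)) ^ n.choose 2 / Real.exp (1/4) ^ b := htail
    _ ≤ Real.exp (57 / 200 * N * p) / Real.exp (6 / 5 * N * p / 4) :=
        div_le_div₀ (Real.exp_pos _).le hnum (Real.exp_pos _) hden
    _ = Real.exp (-(3/200) * N * p) := by
        rw [← Real.exp_sub]
        congr 1
        ring

lemma tailB2 (hp0 : 0 ≤ p) (hp1 : p ≤ 1) (hn : 1 ≤ n) (v : Fin n) :
    grProb n p (fun G => (G.degree v : ℝ) ≤ 13 / 20 * ((n:ℝ) - 1) * p)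
      ≤ Real.exp (-(9/160) * ((n:ℝ) - 1) * p) := by
  have hn1 : (0:ℝ) ≤ (n:ℝ) - 1 := by
    have : (1:ℝ) ≤ (n:ℝ) := by exact_mod_cast hn
    linarith
  have hy0 : (0:ℝ) ≤ 13 / 20 * ((n:ℝ) - 1) * p := by positivity
  set a : ℕ := ⌊13 / 20 * ((n:ℝ) - 1) * p⌋₊ with ha
  have hmono : grProb n p (fun G => (G.degree v : ℝ) ≤ 13 / 20 * ((n:ℝ) - 1) * p)
      ≤ grProb n p (fun G => G.degree v ≤ a) := by
    apply grProb_mono hp0 hp1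
    intro G hG
    exact Nat.le_floor hG
  have hl0 : (0:ℝ) < Real.exp (-(1/4)) := Real.exp_pos _
  have hl1 : Real.exp (-(1/4)) ≤ 1 := Real.exp_le_one_iff.2 (by norm_num)
  have htail := degree_lower_tail (n := n) hp0 hp1 hl0 hl1 a v
  have hcast : ((n - 1 : ℕ) : ℝ) = (n:ℝ) - 1 := by
    rw [Nat.cast_sub hn]; simp
  have hnum : (1 - p + p * Real.exp (-(1/4))) ^ (n - 1)
      ≤ Real.exp (-(7/32) * ((n:ℝ) - 1) * p) := by
    have hbase0 : 0 ≤ 1 - p + p * Real.exp (-(1/4)) := by nlinarith [Real.exp_pos (-(1/4):ℝ)]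
    have hbase : 1 - p + p * Real.exp (-(1/4)) ≤ Real.exp (-(7/32) * p) := by
      have h1 : p * Real.exp (-(1/4)) ≤ p * (25/32) :=
        mul_le_mul_of_nonneg_left exp_neg_quarter_le hp0
      have h2 : -(7/32) * p + 1 ≤ Real.exp (-(7/32) * p) := Real.add_one_le_exp _
      linarith
    calc (1 - p + p * Real.exp (-(1/4))) ^ (n - 1)
        ≤ Real.exp (-(7/32) * p) ^ (n - 1) := pow_le_pow_left₀ hbase0 hbase _
      _ = Real.exp (-(7/32) * ((n:ℝ) - 1) * p) := by
          rw [← Real.exp_nat_mul]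
          congr 1
          rw [hcast]; ring
  have hden : Real.exp (-(13 / 80 * ((n:ℝ) - 1) * p)) ≤ Real.exp (-(1/4)) ^ a := by
    rw [← Real.exp_nat_mul]
    apply Real.exp_le_exp.2
    have hfl := Nat.floor_le hy0
    rw [← ha] at hfl
    nlinarith [hfl]
  calc grProb n p (fun G => (G.degree v : ℝ) ≤ 13 / 20 * ((n:ℝ) - 1) * p)
      ≤ grProb n p (fun G => G.degree v ≤ a) := hmono
    _ ≤ (1 - p + p * Real.exp (-(1/4))) ^ (n - 1) / Real.exp (-(1/4)) ^ a := htail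
    _ ≤ Real.exp (-(7/32) * ((n:ℝ) - 1) * p) / Real.exp (-(13 / 80 * ((n:ℝ) - 1) * p)) :=
        div_le_div₀ (Real.exp_pos _).le hnum (Real.exp_pos _) hden
    _ = Real.exp (-(9/160) * ((n:ℝ) - 1) * p) := by
        rw [← Real.exp_sub]
        congr 1
        ring

/-! ### Deterministic facts about spanning-tree packings -/

lemma hasDisj_mul_le (G : SimpleGraph (Fin n)) {k : ℕ} (hk : HasDisjSpanningTrees G k) :
    k * (n - 1) ≤ edgeCount G := by
  obtain ⟨f, hle, htree, hdisj⟩ := hk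
  have hcard : ∀ i, (f i).edgeFinset.card = n - 1 := by
    intro i
    have := (htree i).card_edgeFinset
    simp only [Fintype.card_fin] at this
    omega
  have hsub : (Finset.univ.biUnion fun i : Fin k => (f i).edgeFinset) ⊆ G.edgeFinset := by
    apply Finset.biUnion_subset.2
    intro i _
    exact SimpleGraph.edgeFinset_mono (hle i)
  have hdisjF : ∀ i ∈ (Finset.univ : Finset (Fin k)), ∀ j ∈ Finset.univ, i ≠ j →
      Disjoint (f i).edgeFinset (f j).edgeFinset := by
    intro i _ j _ hij
    have hd := hdisj i j hij
    rw [← SimpleGraph.coe_edgeFinset, ← SimpleGraph.coe_edgeFinset] at hd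
    exact Finset.disjoint_coe.1 hd
  calc k * (n - 1) = ∑ _i : Fin k, (n - 1) := by
        rw [Finset.sum_const, Finset.card_univ, Fintype.card_fin, smul_eq_mul]
    _ = ∑ i : Fin k, (f i).edgeFinset.card := by
        apply Finset.sum_congr rfl; intro i _; exact (hcard i).symm
    _ = (Finset.univ.biUnion fun i : Fin k => (f i).edgeFinset).card :=
        (Finset.card_biUnion hdisjF).symm
    _ ≤ G.edgeFinset.card := Finset.card_le_card hsub

lemma stp_mul_le (hn : 2 ≤ n) (G : SimpleGraph (Fin n)) : stp G * (n - 1) ≤ edgeCount G := by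
  have h0 : HasDisjSpanningTrees G 0 :=
    ⟨Fin.elim0, fun i => i.elim0, fun i => i.elim0, fun i => i.elim0⟩
  have hne : {k | HasDisjSpanningTrees G k}.Nonempty := ⟨0, h0⟩
  have hbdd : BddAbove {k | HasDisjSpanningTrees G k} := by
    refine ⟨edgeCount G, fun k hk => ?_⟩
    have h2 := hasDisj_mul_le G hk
    have h1 : 1 ≤ n - 1 := by omega
    calc k = k * 1 := (mul_one k).symm
      _ ≤ k * (n - 1) := Nat.mul_le_mul_left k h1
      _ ≤ edgeCount G := h2
  exact hasDisj_mul_le G (Nat.sSup_mem hne hbdd)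

lemma good_implies (hn : 14 ≤ n) (hp0 : 0 ≤ p) (G : SimpleGraph (Fin n))
    (h1 : (edgeCount G : ℝ) < 6 / 5 * (n.choose 2 : ℕ) * p)
    (h2 : ∀ v, (13 / 20 : ℝ) * ((n : ℝ) - 1) * p < (G.degree v : ℝ)) :
    stp G < G.minDegree := by
  haveI : Nonempty (Fin n) := Fin.pos_iff_nonempty.1 (by omega)
  have hn2 : 2 ≤ n := by omega
  have hnR : (14 : ℝ) ≤ (n : ℝ) := by exact_mod_cast hn
  have hstp := stp_mul_le hn2 G
  have hst : (stp G : ℝ) * ((n : ℝ) - 1) ≤ (edgeCount G : ℝ) := by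
    have := (Nat.cast_le (α := ℝ)).2 hstp
    rw [Nat.cast_mul, Nat.cast_sub (by omega : 1 ≤ n)] at this
    simpa using this
  have hchoose : ((n.choose 2 : ℕ) : ℝ) = (n : ℝ) * ((n : ℝ) - 1) / 2 := by
    rw [Nat.cast_choose_two]
  have hkey : (stp G : ℝ) < (13 / 20 : ℝ) * ((n : ℝ) - 1) * p := by
    have hpos : (0 : ℝ) < (n : ℝ) - 1 := by linarith
    have h3 : (stp G : ℝ) * ((n : ℝ) - 1) < (3 / 5) * (n : ℝ) * p * ((n : ℝ) - 1) := by
      rw [hchoose] at h1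
      nlinarith
    have h4 : (stp G : ℝ) < (3 / 5) * (n : ℝ) * p := lt_of_mul_lt_mul_right h3 hpos.le |>.trans_le (le_refl _)
    have h5 : (3 / 5 : ℝ) * (n : ℝ) * p ≤ (13 / 20 : ℝ) * ((n : ℝ) - 1) * p := by nlinarith
    linarith
  obtain ⟨v, hv⟩ := G.exists_minimal_degree_vertex
  have := h2 v
  rw [← hv] at this
  exact_mod_cast hkey.trans this

end ErP

theorem aas_stp_lt_minDegree (p : ℕ → ℝ) (hp0 : ∀ n, 0 ≤ p n) (hp1 : ∀ n, p n ≤ 1)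
    (hlow : ∀ᶠ n : ℕ in Filter.atTop, 51 * Real.log n / n ≤ p n) :
    Filter.Tendsto
      (fun n : ℕ => grProb n (p n) fun G => stp G < G.minDegree)
      Filter.atTop (nhds 1) := by
  -- two explicit error terms
  set E₁ : ℕ → ℝ := fun n => Real.exp (-(3/200) * (n.choose 2 : ℝ) * p n) with hE₁def
  set E₂ : ℕ → ℝ := fun n => (n : ℝ) * Real.exp (-(9/160) * ((n:ℝ) - 1) * p n) with hE₂def
  -- auxiliary: for n ≥ 51, log n ≥ 1 and 51 log n ≤ n * p n
  have haux : ∀ n : ℕ, 51 ≤ n → 51 * Real.log n / n ≤ p n →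
      1 ≤ Real.log n ∧ 51 * Real.log n ≤ (n:ℝ) * p n := by
    intro n hn hl
    have hn0 : (0:ℝ) < n := by
      have : (51:ℝ) ≤ n := by exact_mod_cast hn
      linarith
    have hlog1 : 1 ≤ Real.log n := by
      rw [Real.le_log_iff_exp_le hn0]
      have h1 : Real.exp 1 < 2.7182818286 := Real.exp_one_lt_d9
      have : (51:ℝ) ≤ n := by exact_mod_cast hn
      linarith
    constructor
    · exact hlog1
    · rw [div_le_iff₀ hn0] at hl
      linarith [hl]
  -- E₁ → 0
  have hE1 : Filter.Tendsto E₁ Filter.atTop (nhds 0) := by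
    apply squeeze_zero' (Filter.Eventually.of_forall fun n => (Real.exp_pos _).le)
      (g := fun n : ℕ => Real.exp (((n:ℝ) - 1) * (-(1/4))))
    · filter_upwards [hlow, Filter.eventually_ge_atTop 51] with n hl hn
      apply Real.exp_le_exp.2
      obtain ⟨hlog1, hnp⟩ := haux n hn hl
      have hn1 : (0:ℝ) ≤ (n:ℝ) - 1 := by
        have : (51:ℝ) ≤ n := by exact_mod_cast hn
        linarith
      have h51 : (51:ℝ) ≤ (n:ℝ) * p n := by linarith
      have hNcast : ((n.choose 2 : ℕ) : ℝ) = (n:ℝ) * ((n:ℝ) - 1) / 2 := by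
        rw [Nat.cast_choose_two]
      rw [hNcast]
      nlinarith [mul_le_mul_of_nonneg_left h51 hn1]
    · apply Real.tendsto_exp_atBot.comp
      apply (tendsto_mul_const_atBot_of_neg (by norm_num : (-(1/4):ℝ) < 0)).2
      have : Filter.Tendsto (fun n : ℕ => (n:ℝ) + (-1)) Filter.atTop Filter.atTop :=
        tendsto_atTop_add_const_right Filter.atTop (-1:ℝ) tendsto_natCast_atTop_atTop
      simpa [sub_eq_add_neg] using this
  -- E₂ → 0
  have hE2 : Filter.Tendsto E₂ Filter.atTop (nhds 0) := by
    apply squeeze_zero'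
      (g := fun n : ℕ => Real.exp (Real.log n * (-(29/16))))
    · exact Filter.Eventually.of_forall fun n =>
        mul_nonneg (Nat.cast_nonneg n) (Real.exp_pos _).le
    · filter_upwards [hlow, Filter.eventually_ge_atTop 51] with n hl hn
      obtain ⟨hlog1, hnp⟩ := haux n hn hl
      have hn0 : (0:ℝ) < n := by
        have : (51:ℝ) ≤ n := by exact_mod_cast hn
        linarith
      have h50 : 50 * Real.log n ≤ ((n:ℝ) - 1) * p n := by
        have := hp1 n
        nlinarith
      calc (n:ℝ) * Real.exp (-(9/160) * ((n:ℝ) - 1) * p n)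
          = Real.exp (Real.log n + -(9/160) * ((n:ℝ) - 1) * p n) := by
            rw [Real.exp_add, Real.exp_log hn0]
        _ ≤ Real.exp (Real.log n * (-(29/16))) := by
            apply Real.exp_le_exp.2
            nlinarith
    · apply Real.tendsto_exp_atBot.comp
      apply (tendsto_mul_const_atBot_of_neg (by norm_num : (-(29/16):ℝ) < 0)).2
      exact Real.tendsto_log_atTop.comp tendsto_natCast_atTop_atTop
  -- lower bound eventually
  have hlb : ∀ᶠ n : ℕ in Filter.atTop,
      1 - E₁ n - E₂ n ≤ grProb n (p n) (fun G => stp G < G.minDegree) := by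
    filter_upwards [hlow, Filter.eventually_ge_atTop 51] with n hl hn
    have hB1 := ErP.tailB1 (n := n) (hp0 n) (hp1 n)
    have hB2le : grProb n (p n)
        (fun G => ∃ v, (G.degree v : ℝ) ≤ 13 / 20 * ((n:ℝ) - 1) * p n) ≤ E₂ n := by
      calc grProb n (p n) (fun G => ∃ v, (G.degree v : ℝ) ≤ 13 / 20 * ((n:ℝ) - 1) * p n)
          ≤ ∑ v : Fin n, grProb n (p n)
              (fun G => (G.degree v : ℝ) ≤ 13 / 20 * ((n:ℝ) - 1) * p n) :=
            ErP.grProb_exists_le (hp0 n) (hp1 n) _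
        _ ≤ ∑ _v : Fin n, Real.exp (-(9/160) * ((n:ℝ) - 1) * p n) :=
            Finset.sum_le_sum fun v _ => ErP.tailB2 (hp0 n) (hp1 n) (by omega) v
        _ = E₂ n := by
            rw [Finset.sum_const, Finset.card_univ, Fintype.card_fin, nsmul_eq_mul]
    have hcomb := ErP.one_le_grProb_add (n := n) (p := p n) (hp0 n) (hp1 n)
      (Q₁ := fun G => stp G < G.minDegree)
      (Q₂ := fun G => 6 / 5 * (n.choose 2 : ℝ) * p n ≤ (edgeCount G : ℝ))
      (Q₃ := fun G => ∃ v, (G.degree v : ℝ) ≤ 13 / 20 * ((n:ℝ) - 1) * p n)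
      (by
        intro G h2 h3
        exact ErP.good_implies (by omega) (hp0 n) G (not_le.1 h2)
          (fun v => not_le.1 fun hv => h3 ⟨v, hv⟩))
    have hE₁n : E₁ n = Real.exp (-(3/200) * (n.choose 2 : ℝ) * p n) := rfl
    linarith [hB1, hB2le, hcomb]
  -- upper bound
  have hub : ∀ᶠ n : ℕ in Filter.atTop,
      grProb n (p n) (fun G => stp G < G.minDegree) ≤ 1 :=
    Filter.Eventually.of_forall fun n => ErP.grProb_le_one (hp0 n) (hp1 n) _
  -- squeeze
  have hlbT : Filter.Tendsto (fun n => 1 - E₁ n - E₂ n) Filter.atTop (nhds 1) := by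
    have h := (tendsto_const_nhds (x := (1:ℝ)) (f := Filter.atTop (α := ℕ))).sub hE1 |>.sub hE2
    simpa using h
  exact tendsto_of_tendsto_of_tendsto_of_le_of_le' hlbT tendsto_const_nhds hlb hub
end
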